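/- Let κ < μ < λ be cardinals with κ = cf(μ), θ < κ, and assume: 2^κ < cf(λ); J is an ideal on κ extending the bounded ideal; ⟨λ_ε : ε < κ⟩ is an increasing sequence of strongly inaccessible cardinals cofinal in μ with 2^{λ_ε} = λ_ε⁺ for each ε; the true cofinalities Υ₀ = tcf(∏_ε λ_ε, <_J) and Υ₁ = tcf(∏_ε λ_ε⁺, <_J) exist; and cf(λ) ∉ {Υ₀, Υ₁}. Then the polarized relation (λ, μ) → (λ, μ)^{1,1}_θ holds: for every c : λ × μ → θ there exist A ⊆ λ, B ⊆ μ with |A| = λ, |B| = μ, and c constant on A × B. -/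

import Mathlib

open Cardinal Set

noncomputable section

/-- The canonical type of cardinality `c`: the order type of `c.ord`. -/
abbrev OT (c : Cardinal) : Type _ := c.ord.ToType

/-- `S` splits `B` (as subsets of a set of size `lam`). -/
def Splits (lam : Cardinal) (S B : Set (OT lam)) : Prop :=
  #(↥(S ∩ B)) = lam ∧ #(↥(B \ S)) = lam

/-- A splitting family on `lam`. -/
def IsSplittingFamily (lam : Cardinal) (F : Set (Set (OT lam))) : Prop :=
  ∀ B : Set (OT lam), #B = lam → ∃ S ∈ F, Splits lam S B

/-- The splitting number `𝔰_lam`. -/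
def splittingNumber (lam : Cardinal) : Cardinal :=
  sInf { κ | ∃ F : Set (Set (OT lam)), #F = κ ∧ IsSplittingFamily lam F }

/-- An unreaped family on `lam`. -/
def IsUnreaped (lam : Cardinal) (F : Set (Set (OT lam))) : Prop :=
  (∀ A ∈ F, #A = lam) ∧
  ¬ ∃ S : Set (OT lam), #S = lam ∧ ∀ A ∈ F, Splits lam S A

/-- The reaping number `𝔯_lam`. -/
def reapingNumber (lam : Cardinal) : Cardinal :=
  sInf { κ | ∃ F : Set (Set (OT lam)), #F = κ ∧ IsUnreaped lam F }

/-- The strong polarized relation `(μ, lam) → (μ, lam)^{1,1}_2`. -/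
def StrongPolarized (μ lam : Cardinal) : Prop :=
  ∀ c : OT μ → OT lam → Fin 2,
    ∃ (A : Set (OT μ)) (B : Set (OT lam)) (i : Fin 2),
      #A = μ ∧ #B = lam ∧ ∀ α ∈ A, ∀ β ∈ B, c α β = i

end

noncomputable section StmtElevenHelpers

universe u

lemma mk_OT (c : Cardinal.{u}) : #(OT c) = c := by
  rw [OT, Cardinal.mk_toType, Cardinal.card_ord]

lemma OT_nonempty {c : Cardinal.{u}} (hc : c ≠ 0) : Nonempty (OT c) := by
  rw [OT, Ordinal.nonempty_toType_iff]
  intro h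
  exact hc (by simpa [Cardinal.card_ord] using congrArg Ordinal.card h)

lemma OT_exists_gt {c : Cardinal.{u}} (hc : ℵ₀ ≤ c) (b : OT c) : ∃ j : OT c, b < j := by
  classical
  let e := (Ordinal.ToType.mk (o := c.ord))
  set x : Set.Iio c.ord := e.symm b with hx
  have hxo : (x : Ordinal) < c.ord := x.2
  have hsucc : Order.succ (x : Ordinal) < c.ord := (Cardinal.isSuccLimit_ord hc).succ_lt hxo
  refine ⟨e ⟨Order.succ (x : Ordinal), hsucc⟩, ?_⟩
  have hlt : x < (⟨Order.succ (x : Ordinal), hsucc⟩ : Set.Iio c.ord) := by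
    rw [← Subtype.coe_lt_coe]
    exact Order.lt_succ _
  calc b = e x := (e.apply_symm_apply b).symm
    _ < _ := e.lt_iff_lt.mpr hlt

lemma OT_bdd_of_small {c : Cardinal.{u}} (hreg : c.IsRegular) {S : Set (OT c)}
    (hS : #S < c) : ∃ b : OT c, ∀ s ∈ S, s ≤ b := by
  classical
  let e := (Ordinal.ToType.mk (o := c.ord))
  have hcof : Ordinal.cof c.ord = c := hreg.cof_eq
  have hsup : (⨆ s : S, ((e.symm s.1 : Set.Iio c.ord) : Ordinal)) < c.ord :=
    Ordinal.iSup_lt_ord (by rwa [hcof]) fun s => (e.symm s.1).2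
  refine ⟨e ⟨_, hsup⟩, fun s hs => ?_⟩
  have h1 : (e.symm s : Set.Iio c.ord) ≤ ⟨_, hsup⟩ := by
    rw [← Subtype.coe_le_coe]
    exact le_ciSup (Ordinal.bddAbove_range _) (⟨s, hs⟩ : S)
  calc s = e (e.symm s) := (e.apply_symm_apply s).symm
    _ ≤ _ := e.le_iff_le.mpr h1

lemma csupr_lt_of_lt_cof {c : Cardinal.{u}} {ι : Type u} (f : ι → Cardinal.{u})
    (hι : #ι < c.ord.cof) (hf : ∀ i, f i < c) : (⨆ i, f i) < c := by
  rcases isEmpty_or_nonempty ι with h | h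
  · have h0 : (0 : Cardinal) < c := by
      refine lt_of_le_of_lt (Cardinal.zero_le _) (lt_of_lt_of_le hι ?_)
      exact (Ordinal.cof_le_card _).trans (by rw [Cardinal.card_ord])
    simpa [ciSup_of_empty] using h0
  · have h1 : ∀ i, (f i).ord < c.ord := fun i => Cardinal.ord_lt_ord.mpr (hf i)
    have h2 : (⨆ i, (f i).ord) < c.ord := Ordinal.iSup_lt_ord hι h1
    have h3 : (⨆ i, f i) ≤ (⨆ i, (f i).ord).card := by
      refine ciSup_le' fun i => ?_
      have hle : (f i).ord ≤ ⨆ i, (f i).ord := le_ciSup (Ordinal.bddAbove_range _) i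
      simpa [Cardinal.card_ord] using Ordinal.card_le_card hle
    exact h3.trans_lt (Cardinal.lt_ord.mp h2)

lemma pigeon {lam : Cardinal.{u}} {X T : Type u} (hX : #X = lam) (hlam : ℵ₀ ≤ lam)
    (F : X → T) (hT : #T < lam.ord.cof) : ∃ t : T, #{x : X | F x = t} = lam := by
  by_contra hco
  push_neg at hco
  have hfib : ∀ t, #{x : X | F x = t} < lam := fun t =>
    lt_of_le_of_ne (hX ▸ Cardinal.mk_subtype_le _) (hco t)
  have hcover : (⋃ t : T, {x : X | F x = t}) = Set.univ := by
    ext x; simp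
  have h1 : lam ≤ #T * ⨆ t : T, #{x : X | F x = t} := by
    calc lam = #(Set.univ : Set X) := by rw [Cardinal.mk_univ, hX]
      _ = #(⋃ t : T, {x : X | F x = t}) := by rw [hcover]
      _ ≤ _ := Cardinal.mk_iUnion_le _
  have h2 : (⨆ t : T, #{x : X | F x = t}) < lam := csupr_lt_of_lt_cof _ hT hfib
  have h3 : #T < lam :=
    hT.trans_le ((Ordinal.cof_le_card _).trans (by rw [Cardinal.card_ord]))
  exact absurd h1 (not_le.mpr (Cardinal.mul_lt_of_lt hlam h3 h2))

lemma pigeonSet {lam : Cardinal.{u}} {α T : Type u} {A : Set α} (hA : #A = lam)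
    (hlam : ℵ₀ ≤ lam) (F : α → T) (hT : #T < lam.ord.cof) :
    ∃ t : T, #({a ∈ A | F a = t} : Set α) = lam := by
  obtain ⟨t, ht⟩ := pigeon hA hlam (fun x : A => F x.1) hT
  exact ⟨t, by rw [Cardinal.mk_sep]; exact ht⟩

lemma claimP {lam Υ : Cardinal.{u}} {X : Type u} (hX : #X = lam) (hlam : ℵ₀ ≤ lam)
    (hreg : Υ.IsRegular) (hne : lam.ord.cof ≠ Υ) (F : X → OT Υ) :
    ∃ j : OT Υ, #{x : X | F x < j} = lam := by
  rcases lt_trichotomy Υ lam with hlt | heq | hgt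
  · by_contra hco
    push_neg at hco
    have hfib : ∀ j, #{x : X | F x < j} < lam := fun j =>
      lt_of_le_of_ne (hX ▸ Cardinal.mk_subtype_le _) (hco j)
    have hcover : (⋃ j : OT Υ, {x : X | F x < j}) = Set.univ := by
      ext x
      simp only [Set.mem_iUnion, Set.mem_setOf_eq, Set.mem_univ, iff_true]
      exact OT_exists_gt hreg.aleph0_le (F x)
    have hsup : lam ≤ Υ * ⨆ j : OT Υ, #{x : X | F x < j} := by
      calc lam = #(Set.univ : Set X) := by rw [Cardinal.mk_univ, hX]
        _ = #(⋃ j : OT Υ, {x : X | F x < j}) := by rw [hcover]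
        _ ≤ #(OT Υ) * ⨆ j : OT Υ, #{x : X | F x < j} := Cardinal.mk_iUnion_le _
        _ = _ := by rw [mk_OT]
    have hsup2 : (⨆ j : OT Υ, #{x : X | F x < j}) = lam := by
      refine le_antisymm (ciSup_le' fun j => (hfib j).le) ?_
      by_contra hlt2
      push_neg at hlt2
      exact absurd hsup (not_le.mpr (Cardinal.mul_lt_of_lt hlam hlt hlt2))
    have hc0 : lam.ord.cof < Υ := by
      rcases lt_trichotomy lam.ord.cof Υ with h | h | h
      · exact h
      · exact absurd h hne
      · exfalso
        have := csupr_lt_of_lt_cof (fun j : OT Υ => #{x : X | F x < j})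
          (by rw [mk_OT]; exact h) hfib
        rw [hsup2] at this
        exact lt_irrefl _ this
    have hne' : Nonempty (OT Υ) := OT_nonempty hreg.pos.ne'
    obtain ⟨ι, f, hlsub, hι⟩ := Ordinal.exists_lsub_cof lam.ord
    have hflt : ∀ i, (f i).card < lam := fun i =>
      Cardinal.lt_ord.mp (hlsub ▸ Ordinal.lt_lsub f i)
    have hchoose : ∀ i : ι, ∃ j : OT Υ, (f i).card < #{x : X | F x < j} := by
      intro i
      have h := (hflt i).trans_le hsup2.ge
      rwa [lt_ciSup_iff (Cardinal.bddAbove_range _)] at h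
    choose jj hjj using hchoose
    have hrange : #(Set.range jj) < Υ :=
      (Cardinal.mk_range_le).trans_lt (by rw [hι]; exact hc0)
    obtain ⟨b, hb⟩ := OT_bdd_of_small hreg hrange
    obtain ⟨b', hb'⟩ := OT_exists_gt hreg.aleph0_le b
    have hm : ∀ i, (f i).card < #{x : X | F x < b'} := by
      intro i
      refine (hjj i).trans_le (Cardinal.mk_le_mk_of_subset ?_)
      intro x hx
      exact lt_of_lt_of_le hx ((hb _ (Set.mem_range_self i)).trans hb'.le)
    have hord : lam.ord ≤ (#{x : X | F x < b'}).ord := by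
      rw [← hlsub]
      exact Ordinal.lsub_le fun i => Cardinal.lt_ord.mpr (hm i)
    have : lam ≤ #{x : X | F x < b'} := by rwa [Cardinal.ord_le_ord] at hord
    exact absurd this (not_le.mpr (hfib b'))
  · exfalso
    subst heq
    exact hne hreg.cof_eq
  · have hrange : #(Set.range F) < Υ :=
      (Cardinal.mk_range_le).trans_lt (by rw [hX]; exact hgt)
    obtain ⟨b, hb⟩ := OT_bdd_of_small hreg hrange
    obtain ⟨b', hb'⟩ := OT_exists_gt hreg.aleph0_le b
    refine ⟨b', ?_⟩
    have huniv : {x : X | F x < b'} = Set.univ :=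
      eq_univ_of_forall fun x => (hb _ (Set.mem_range_self x)).trans_lt hb'
    rw [huniv, Cardinal.mk_univ, hX]

lemma claimPSet {lam Υ : Cardinal.{u}} {α : Type u} {A : Set α} (hA : #A = lam)
    (hlam : ℵ₀ ≤ lam) (hreg : Υ.IsRegular) (hne : lam.ord.cof ≠ Υ) (F : α → OT Υ) :
    ∃ j : OT Υ, #({a ∈ A | F a < j} : Set α) = lam := by
  obtain ⟨j, hj⟩ := claimP hA hlam hreg hne (fun x : A => F x.1)
  exact ⟨j, by rw [Cardinal.mk_sep]; exact hj⟩

end StmtElevenHelpers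

/-- `J` is a (proper) ideal on the type `K`. -/
def IsIdealOn (K : Type*) (J : Set (Set K)) : Prop :=
  ∅ ∈ J ∧ (∀ s t : Set K, s ⊆ t → t ∈ J → s ∈ J) ∧
  (∀ s t : Set K, s ∈ J → t ∈ J → s ∪ t ∈ J) ∧ Set.univ ∉ J

/-- `f <_J g` for functions into the ordinals. -/
def LtIdeal {K : Type*} (J : Set (Set K)) (f g : K → Ordinal) : Prop :=
  {ε : K | g ε ≤ f ε} ∈ J

/-- `f` is a member of the product `∏_ε ν ε`. -/
def InProd {K : Type*} (ν : K → Cardinal) (f : K → Ordinal) : Prop :=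
  ∀ ε : K, f ε < (ν ε).ord

/-- `Υ = tcf(∏_ε ν ε, <_J)`: there is a `<_J`-increasing cofinal sequence of
length `Υ` in the product, with `Υ` regular. -/
def IsTrueCofinality {K : Type*} (J : Set (Set K)) (ν : K → Cardinal)
    (Υ : Cardinal) : Prop :=
  Υ.IsRegular ∧ ∃ h : OT Υ → K → Ordinal,
    (∀ i, InProd ν (h i)) ∧
    (∀ i i' : OT Υ, i < i' → LtIdeal J (h i) (h i')) ∧
    (∀ f, InProd ν f → ∃ i, LtIdeal J f (h i))

/-- polarized relation above a singular cardinal, from pcf assumptions. -/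
theorem stmt11 (κ μ lam θ : Cardinal)
    (h1 : κ < μ) (h2 : μ < lam) (hcofμ : μ.ord.cof = κ) (hθ : θ < κ)
    (h2κ : 2 ^ κ < lam.ord.cof)
    (J : Set (Set (OT κ))) (hJ : IsIdealOn (OT κ) J)
    (hbd : ∀ s : Set (OT κ), Set.Bounded (· ≤ ·) s → s ∈ J)
    (lamseq : OT κ → Cardinal) (hinc : StrictMono lamseq)
    (hsup : (⨆ ε, lamseq ε) = μ)
    (hinacc : ∀ ε, (lamseq ε).IsInaccessible)
    (hgch : ∀ ε, 2 ^ lamseq ε = Order.succ (lamseq ε))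
    (Υ0 Υ1 : Cardinal)
    (hT0 : IsTrueCofinality J (fun ε => lamseq ε) Υ0)
    (hT1 : IsTrueCofinality J (fun ε => Order.succ (lamseq ε)) Υ1)
    (hne0 : lam.ord.cof ≠ Υ0) (hne1 : lam.ord.cof ≠ Υ1) :
    ∀ c : OT lam → OT μ → OT θ,
      ∃ (A : Set (OT lam)) (B : Set (OT μ)) (i : OT θ),
        #A = lam ∧ #B = μ ∧ ∀ α ∈ A, ∀ β ∈ B, c α β = i := by
  classical
  intro c
  -- basic cardinal facts
  have hκ0 : κ ≠ 0 := fun h => by simp [h] at hθ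
  obtain ⟨ε₁⟩ := OT_nonempty hκ0
  have hμℵ : ℵ₀ < μ := by
    refine lt_of_lt_of_le (hinacc ε₁).1 ?_
    rw [← hsup]; exact le_ciSup (Cardinal.bddAbove_range _) ε₁
  have hκinf : ℵ₀ ≤ κ := by
    rw [← hcofμ]
    exact (Ordinal.aleph0_le_cof).2 (Cardinal.isSuccLimit_ord hμℵ.le)
  have hκreg : κ.IsRegular := hcofμ ▸ Cardinal.isRegular_cof (Cardinal.isSuccLimit_ord hμℵ.le)
  have hlaminf : ℵ₀ ≤ lam := (hμℵ.trans h2).le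
  have hμ0 : μ ≠ 0 := (aleph0_pos.trans hμℵ).ne'
  have hlam0 : lam ≠ 0 := (aleph0_pos.trans_le hlaminf).ne'
  obtain ⟨β₀⟩ := OT_nonempty hμ0
  obtain ⟨α₀⟩ := OT_nonempty hlam0
  by_cases hθz : θ = 0
  · have hem : IsEmpty (OT θ) := by
      rw [← Cardinal.mk_eq_zero_iff, mk_OT]; exact hθz
    exact (hem.false (c α₀ β₀)).elim
  -- the threshold ε₀
  have hε₀ex : ∃ ε₀, κ < lamseq ε₀ := by
    by_contra h; push_neg at h
    have : μ ≤ κ := by rw [← hsup]; exact ciSup_le' h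
    exact absurd h1 (not_lt.mpr this)
  obtain ⟨ε₀, hε₀κ⟩ := hε₀ex
  have hthl : ∀ ε, ε₀ ≤ ε → θ < lamseq ε := fun ε h =>
    hθ.trans (hε₀κ.trans_le (hinc.monotone h))
  have hlmu : ∀ ε, lamseq ε ≤ μ := fun ε => by
    rw [← hsup]; exact le_ciSup (Cardinal.bddAbove_range _) ε
  have hlinf : ∀ ε, ℵ₀ ≤ lamseq ε := fun ε => (hinacc ε).1.le
  have hl0 : ∀ ε, (0 : Cardinal) < lamseq ε := fun ε => aleph0_pos.trans (hinacc ε).1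
  have hlord0 : ∀ ε, (0 : Ordinal) < (lamseq ε).ord := fun ε => by
    calc (0 : Ordinal) = (0 : Cardinal).ord := Cardinal.ord_zero.symm
      _ < _ := Cardinal.ord_lt_ord.mpr (hl0 ε)
  -- blocks
  have hBex : ∀ ε, ∃ B : Set (OT μ), #B = lamseq ε := fun ε =>
    Cardinal.le_mk_iff_exists_set.1 (by rw [mk_OT]; exact hlmu ε)
  choose Bl hBl using hBex
  -- scales
  obtain ⟨hreg1, h1s, h1in, h1mono, h1cof⟩ := hT1
  obtain ⟨hreg0, h0s, h0in, h0mono, h0cof⟩ := hT0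
  -- row encoding
  have hrowcard : ∀ ε, ε₀ ≤ ε → #(↥(Bl ε) → OT θ) ≤ Order.succ (lamseq ε) := by
    intro ε hε
    rw [← Cardinal.power_def, mk_OT, hBl]
    calc θ ^ lamseq ε ≤ (lamseq ε) ^ (lamseq ε) :=
          Cardinal.power_le_power_right (hthl ε hε).le
      _ = 2 ^ lamseq ε := Cardinal.power_self_eq (hlinf ε)
      _ = _ := hgch ε
  have hencEx : ∀ ε, ∃ enc : (↥(Bl ε) → OT θ) → Ordinal,
      (∀ r, enc r < (Order.succ (lamseq ε)).ord) ∧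
      (ε₀ ≤ ε → Function.Injective enc) := by
    intro ε
    by_cases hε : ε₀ ≤ ε
    · obtain ⟨emb⟩ := (Cardinal.le_def _ _).1
        ((hrowcard ε hε).trans_eq (mk_OT _).symm)
      refine ⟨fun r =>
        (((Ordinal.ToType.mk (o := (Order.succ (lamseq ε)).ord))).symm (emb r) : Set.Iio _),
        fun r => ?_, fun _ r r' hrr => ?_⟩
      · exact (((Ordinal.ToType.mk (o := _))).symm (emb r)).2
      · exact emb.injective (((Ordinal.ToType.mk (o := _))).symm.injective (Subtype.ext hrr))
    · refine ⟨fun _ => 0, fun r => ?_, fun h => absurd h hε⟩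
      have h0s' : (0 : Cardinal) < Order.succ (lamseq ε) :=
        (hl0 ε).trans_le (Order.le_succ _)
      calc (0 : Ordinal) = (0 : Cardinal).ord := Cardinal.ord_zero.symm
        _ < _ := Cardinal.ord_lt_ord.mpr h0s'
  choose enc henclt hencinj using hencEx
  -- rows and first coding
  let row : OT lam → (ε : OT κ) → (↥(Bl ε) → OT θ) := fun α ε β => c α β.1
  let g : OT lam → OT κ → Ordinal := fun α ε => enc ε (row α ε)
  have hgIn : ∀ α, InProd (fun ε => Order.succ (lamseq ε)) (g α) := fun α ε => henclt ε _
  choose i1 hi1 using fun α => h1cof _ (hgIn α)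
  obtain ⟨j₁, hA1c⟩ := claimP (mk_OT lam) hlaminf hreg1 hne1 i1
  -- A1
  let A1 : Set (OT lam) := {α | i1 α < j₁}
  have hA1card : #A1 = lam := hA1c
  let Z : OT lam → Set (OT κ) := fun α => {ε | h1s j₁ ε ≤ g α ε}
  have hZJ : ∀ α ∈ A1, Z α ∈ J := by
    intro α hα
    have hsub : Z α ⊆ {ε | h1s j₁ ε ≤ h1s (i1 α) ε} ∪ {ε | h1s (i1 α) ε ≤ g α ε} := by
      intro ε hε
      rcases le_or_gt (h1s (i1 α) ε) (g α ε) with h | h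
      · exact Or.inr h
      · exact Or.inl (le_trans hε h.le)
    exact hJ.2.1 _ _ hsub (hJ.2.2.1 _ _ (h1mono _ _ hα) (hi1 α))
  have hsetOTκ : #(Set (OT κ)) < lam.ord.cof := by
    rw [Cardinal.mk_set, mk_OT]; exact h2κ
  obtain ⟨Zs, hA2card⟩ := pigeonSet hA1card hlaminf Z hsetOTκ
  let A2 : Set (OT lam) := {a ∈ A1 | Z a = Zs}
  have hZsJ : Zs ∈ J := by
    have hne' : Nonempty ↥A2 := by
      rw [← Cardinal.mk_ne_zero_iff]
      rw [show #↥A2 = lam from hA2card]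
      exact hlam0
    obtain ⟨⟨α, hαA1, hZα⟩⟩ := hne'
    exact hZα ▸ hZJ α hαA1
  -- transfer injections
  have hDEx : ∀ ε, ∃ D : (h1s j₁ ε).ToType → OT (lamseq ε), Function.Injective D := by
    intro ε
    have hcard : (h1s j₁ ε).card ≤ lamseq ε :=
      Order.lt_succ_iff.mp (Cardinal.lt_ord.mp (h1in j₁ ε))
    have hle : #((h1s j₁ ε).ToType) ≤ #(OT (lamseq ε)) := by
      rw [Cardinal.mk_toType, mk_OT]; exact hcard
    obtain ⟨emb⟩ := (Cardinal.le_def _ _).1 hle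
    exact ⟨emb, emb.injective⟩
  choose D hD using hDEx
  let Φ : (ε : OT κ) → (↥(Bl ε) → OT θ) → Ordinal := fun ε r =>
    if h : enc ε r < h1s j₁ ε then
      (((Ordinal.ToType.mk (o := (lamseq ε).ord))).symm
        (D ε ((Ordinal.ToType.mk (o := (h1s j₁ ε))) ⟨enc ε r, h⟩)) : Set.Iio _)
    else 0
  have hΦlt : ∀ ε r, Φ ε r < (lamseq ε).ord := by
    intro ε r
    by_cases h : enc ε r < h1s j₁ ε
    · simp only [Φ, dif_pos h]
      exact (((Ordinal.ToType.mk (o := (lamseq ε).ord))).symm _).2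
    · simp only [Φ, dif_neg h]
      exact hlord0 ε
  have hΦinj : ∀ ε, ε₀ ≤ ε → ∀ r r', enc ε r < h1s j₁ ε → enc ε r' < h1s j₁ ε →
      Φ ε r = Φ ε r' → r = r' := by
    intro ε hε r r' h h' heq
    simp only [Φ, dif_pos h, dif_pos h'] at heq
    have e1 := ((Ordinal.ToType.mk (o := (lamseq ε).ord))).symm.injective (Subtype.ext heq)
    have e2 := hD ε e1
    have e3 := ((Ordinal.ToType.mk (o := (h1s j₁ ε)))).injective e2
    exact hencinj ε hε (congrArg Subtype.val e3)
  let t : OT lam → OT κ → Ordinal := fun α ε => Φ ε (row α ε)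
  have htIn : ∀ α, InProd (fun ε => lamseq ε) (t α) := fun α ε => hΦlt ε _
  choose i0 hi0 using fun α => h0cof _ (htIn α)
  obtain ⟨j₀, hA3card⟩ := claimPSet hA2card hlaminf hreg0 hne0 i0
  let A3 : Set (OT lam) := {a ∈ A2 | i0 a < j₀}
  let V : OT lam → Set (OT κ) := fun α => {ε | h0s j₀ ε ≤ t α ε}
  have hVJ : ∀ α ∈ A3, V α ∈ J := by
    intro α hα
    have hsub : V α ⊆ {ε | h0s j₀ ε ≤ h0s (i0 α) ε} ∪ {ε | h0s (i0 α) ε ≤ t α ε} := by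
      intro ε hε
      rcases le_or_gt (h0s (i0 α) ε) (t α ε) with h | h
      · exact Or.inr h
      · exact Or.inl (le_trans hε h.le)
    exact hJ.2.1 _ _ hsub (hJ.2.2.1 _ _ (h0mono _ _ hα.2) (hi0 α))
  obtain ⟨Vs, hA4card⟩ := pigeonSet hA3card hlaminf V hsetOTκ
  let A4 : Set (OT lam) := {a ∈ A3 | V a = Vs}
  have hVsJ : Vs ∈ J := by
    have hne' : Nonempty ↥A4 := by
      rw [← Cardinal.mk_ne_zero_iff]
      rw [show #↥A4 = lam from hA4card]
      exact hlam0
    obtain ⟨⟨α, hαA3, hVα⟩⟩ := hne'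
    exact hVα ▸ hVJ α hαA3
  -- the good set W
  let W : Set (OT κ) := {ε | ε₀ ≤ ε ∧ ε ∉ Zs ∧ ε ∉ Vs}
  have hW : ∀ b : OT κ, ∃ ε ∈ W, ¬ ε ≤ b := by
    intro b
    by_contra hco
    push_neg at hco
    apply hJ.2.2.2
    have hcover : (Set.univ : Set (OT κ)) ⊆
        ({ε | ε ≤ b} ∪ ({ε | ε < ε₀} ∪ (Zs ∪ Vs))) := by
      intro ε _
      by_cases h1' : ε₀ ≤ ε
      · by_cases h2' : ε ∈ Zs
        · exact Or.inr (Or.inr (Or.inl h2'))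
        · by_cases h3' : ε ∈ Vs
          · exact Or.inr (Or.inr (Or.inr h3'))
          · exact Or.inl (hco ε ⟨h1', h2', h3'⟩)
      · exact Or.inr (Or.inl (not_le.mp h1'))
    refine hJ.2.1 _ _ hcover ?_
    refine hJ.2.2.1 _ _ (hbd _ ⟨b, fun x hx => hx⟩)
      (hJ.2.2.1 _ _ (hbd _ ⟨ε₀, fun x hx => hx.le⟩) (hJ.2.2.1 _ _ hZsJ hVsJ))
  -- key facts
  have hkey : ∀ α ∈ A4, ∀ ε ∈ W, enc ε (row α ε) < h1s j₁ ε ∧ Φ ε (row α ε) < h0s j₀ ε := by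
    intro α hα ε hε
    obtain ⟨⟨⟨hαA1, hZα⟩, hi0α⟩, hVα⟩ := hα
    constructor
    · by_contra hc
      exact hε.2.1 (hZα ▸ (not_lt.mp hc : h1s j₁ ε ≤ g α ε))
    · by_contra hc
      exact hε.2.2 (hVα ▸ (not_lt.mp hc : h0s j₀ ε ≤ t α ε))
  -- per-block homogeneous sets
  have hstep : ∀ ε : OT κ, ∃ (S : Set (OT μ)) (p : OT μ),
      ε ∈ W → #S = lamseq ε ∧ p ∈ S ∧ ∀ α ∈ A4, ∀ b ∈ S, c α b = c α p := by
    intro ε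
    by_cases hε : ε ∈ W
    · -- the achieved rows
      let R : Set (↥(Bl ε) → OT θ) := {r | ∃ α ∈ A4, r = row α ε}
      have hΦR : ∀ r : ↥R, Φ ε r.1 < h0s j₀ ε := by
        rintro ⟨r, α, hα, rfl⟩
        exact (hkey α hα ε hε).2
      have hencR : ∀ r : ↥R, enc ε r.1 < h1s j₁ ε := by
        rintro ⟨r, α, hα, rfl⟩
        exact (hkey α hα ε hε).1
      let ψ : ↥R → (h0s j₀ ε).ToType := fun r =>
        (Ordinal.ToType.mk (o := (h0s j₀ ε))) ⟨Φ ε r.1, hΦR r⟩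
      have hψinj : Function.Injective ψ := by
        intro r r' hrr
        have hv := congrArg Subtype.val (((Ordinal.ToType.mk (o := (h0s j₀ ε)))).injective hrr)
        exact Subtype.ext (hΦinj ε hε.1 r.1 r'.1 (hencR r) (hencR r') hv)
      have hRcard : #↥R ≤ (h0s j₀ ε).card := by
        calc #↥R ≤ #((h0s j₀ ε).ToType) := Cardinal.mk_le_of_injective hψinj
          _ = _ := Cardinal.mk_toType _
      have hρlt : (h0s j₀ ε).card < lamseq ε := Cardinal.lt_ord.mp (h0in j₀ ε)
      -- pigeonhole inside the block
      let q : ↥(Bl ε) → (↥R → OT θ) := fun β r => r.1 β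
      have htarget : #(↥R → OT θ) < (lamseq ε).ord.cof := by
        rw [(hinacc ε).isRegular.cof_eq, ← Cardinal.power_def, mk_OT]
        calc θ ^ #↥R ≤ θ ^ (h0s j₀ ε).card :=
              Cardinal.power_le_power_left hθz hRcard
          _ ≤ (2 ^ θ) ^ (h0s j₀ ε).card :=
              Cardinal.power_le_power_right (Cardinal.cantor θ).le
          _ = 2 ^ (θ * (h0s j₀ ε).card) := Cardinal.power_mul.symm
          _ < lamseq ε := (hinacc ε).isStrongLimit.two_power_lt
              (Cardinal.mul_lt_of_lt (hlinf ε) (hthl ε hε.1) hρlt)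
      obtain ⟨y, hy⟩ := pigeon (hBl ε) (hlinf ε) q htarget
      have hfibne : Nonempty ↥{x : ↥(Bl ε) | q x = y} := by
        rw [← Cardinal.mk_ne_zero_iff, hy]
        exact (hl0 ε).ne'
      obtain ⟨p0⟩ := hfibne
      refine ⟨Subtype.val '' {x : ↥(Bl ε) | q x = y}, p0.1.1, fun _ => ⟨?_, ?_, ?_⟩⟩
      · rw [Cardinal.mk_image_eq Subtype.val_injective]
        exact hy
      · exact ⟨p0.1, p0.2, rfl⟩
      · intro α hα b hb
        obtain ⟨xβ, hxβ, rfl⟩ := hb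
        have hrR : row α ε ∈ R := ⟨α, hα, rfl⟩
        have hqq : q xβ = q p0.1 := by rw [hxβ, p0.2]
        exact congrFun hqq ⟨row α ε, hrR⟩
    · exact ⟨∅, β₀, fun h => absurd h hε⟩
  choose Bst pt hBst using hstep
  -- final pigeonhole on colors of the block representatives
  let ω : OT lam → (OT κ → OT θ) := fun α ε => c α (pt ε)
  have hωtarget : #(OT κ → OT θ) < lam.ord.cof := by
    rw [← Cardinal.power_def, mk_OT, mk_OT]
    refine lt_of_le_of_lt ?_ h2κ
    calc θ ^ κ ≤ κ ^ κ := Cardinal.power_le_power_right hθ.le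
      _ = 2 ^ κ := Cardinal.power_self_eq hκinf
  obtain ⟨ωs, hA5card⟩ := pigeonSet hA4card hlaminf ω hωtarget
  let A5 : Set (OT lam) := {a ∈ A4 | ω a = ωs}
  -- choose the color
  have hEex : ∃ i : OT θ, ∀ b : OT κ, ∃ ε, (ε ∈ W ∧ ωs ε = i) ∧ ¬ ε ≤ b := by
    by_contra hco
    push_neg at hco
    choose bnd hbnd using hco
    have hrange : #(Set.range bnd) < κ :=
      (Cardinal.mk_range_le).trans_lt (by rw [mk_OT]; exact hθ)
    obtain ⟨bb, hbb⟩ := OT_bdd_of_small hκreg hrange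
    obtain ⟨ε, hεW, hεb⟩ := hW bb
    exact hεb ((hbnd (ωs ε) ε ⟨hεW, rfl⟩).trans (hbb _ (Set.mem_range_self _)))
  obtain ⟨iStar, hEunb⟩ := hEex
  let E : Set (OT κ) := {ε | ε ∈ W ∧ ωs ε = iStar}
  let B : Set (OT μ) := ⋃ ε ∈ E, Bst ε
  have hBμ : #B = μ := by
    refine le_antisymm ?_ ?_
    · calc #↥B ≤ #(Set.univ : Set (OT μ)) :=
          Cardinal.mk_le_mk_of_subset (Set.subset_univ _)
        _ = μ := by rw [Cardinal.mk_univ, mk_OT]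
    · refine le_of_eq_of_le hsup.symm (ciSup_le' fun ε => ?_)
      obtain ⟨ε', hε'E, hε'⟩ := hEunb ε
      have h1' : lamseq ε ≤ lamseq ε' := hinc.monotone (not_le.mp hε').le
      have h2' : lamseq ε' ≤ #↥B := by
        have hsub : Bst ε' ⊆ B := Set.subset_biUnion_of_mem hε'E
        have hh := Cardinal.mk_le_mk_of_subset hsub
        rwa [(hBst ε' hε'E.1).1] at hh
      exact h1'.trans h2'
  refine ⟨A5, B, iStar, hA5card, hBμ, ?_⟩
  intro α hα β hβ
  obtain ⟨hαA4, hωα⟩ := hα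
  simp only [B, Set.mem_iUnion] at hβ
  obtain ⟨ε, hεE, hβε⟩ := hβ
  have hrw := (hBst ε hεE.1).2.2 α hαA4 β hβε
  calc c α β = c α (pt ε) := hrw
    _ = ω α ε := rfl
    _ = ωs ε := by rw [hωα]
    _ = iStar := hεE.2
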